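/- Let R, R_d ∈ SO(3) and ψ ∈ ℝ with Ψ(R,R_d) < ψ < 2. Then Ψ(R,R_d) ≤ ‖e_R(R,R_d)‖²/(2 - ψ), where Ψ(R,R_d) = (1/2)tr(I - R_dᵀR) and e_R = (1/2)S⁻¹(R_dᵀR - RᵀR_d). -/

import Mathlib

open Matrix

noncomputable def enorm3 (v : Fin 3 → ℝ) : ℝ := ‖(WithLp.equiv 2 (Fin 3 → ℝ)).symm v‖

def vee (A : Matrix (Fin 3) (Fin 3) ℝ) : Fin 3 → ℝ := ![A 2 1, A 0 2, A 1 0]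

noncomputable def Psi (R Rd : Matrix (Fin 3) (Fin 3) ℝ) : ℝ :=
  (1 / 2) * Matrix.trace (1 - Rdᵀ * R)

noncomputable def eRvec (R Rd : Matrix (Fin 3) (Fin 3) ℝ) : Fin 3 → ℝ :=
  (1 / 2 : ℝ) • vee (Rdᵀ * R - Rᵀ * Rd)

set_option maxHeartbeats 1000000 in
theorem stmt3 (R Rd : Matrix (Fin 3) (Fin 3) ℝ) (ψ : ℝ)
    (hR : Rᵀ * R = 1) (hRdet : R.det = 1)
    (hRd : Rdᵀ * Rd = 1) (hRddet : Rd.det = 1)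
    (h1 : Psi R Rd < ψ) (h2 : ψ < 2) :
    Psi R Rd ≤ (enorm3 (eRvec R Rd)) ^ 2 / (2 - ψ) := by
  set Q : Matrix (Fin 3) (Fin 3) ℝ := Rdᵀ * R with hQdef
  have hRdRdT : Rd * Rdᵀ = 1 := mul_eq_one_comm.mp hRd
  have hQ : Qᵀ * Q = 1 := by
    simp only [hQdef, Matrix.transpose_mul, Matrix.transpose_transpose]
    calc Rᵀ * Rd * (Rdᵀ * R) = Rᵀ * (Rd * Rdᵀ) * R := by
          simp [Matrix.mul_assoc]
      _ = 1 := by rw [hRdRdT, Matrix.mul_one, hR]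
  have hdetQ : Q.det = 1 := by
    simp [hQdef, Matrix.det_mul, hRdet, hRddet]
  have hadj : adjugate Q = Qᵀ := by
    calc adjugate Q = (Qᵀ * Q) * adjugate Q := by rw [hQ, Matrix.one_mul]
      _ = Qᵀ * (Q * adjugate Q) := by rw [Matrix.mul_assoc]
      _ = Qᵀ := by rw [Matrix.mul_adjugate, hdetQ, one_smul, Matrix.mul_one]
  -- entrywise cofactor identities
  have hcof := fun i j => congrFun (congrFun hadj i) j
  rw [adjugate_fin_three] at hadj
  have c00 : Q 1 1 * Q 2 2 - Q 1 2 * Q 2 1 = Q 0 0 := by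
    have := congrFun (congrFun hadj 0) 0; simpa using this
  have c11 : Q 0 0 * Q 2 2 - Q 0 2 * Q 2 0 = Q 1 1 := by
    have := congrFun (congrFun hadj 1) 1; simpa using this
  have c22 : Q 0 0 * Q 1 1 - Q 0 1 * Q 1 0 = Q 2 2 := by
    have := congrFun (congrFun hadj 2) 2; simpa using this
  -- column norm identities from QᵀQ = 1
  have hcol : ∀ j : Fin 3, Q 0 j ^ 2 + Q 1 j ^ 2 + Q 2 j ^ 2 = 1 := by
    intro j
    have := congrFun (congrFun hQ j) j
    simp [Matrix.mul_apply, Matrix.transpose_apply, Fin.sum_univ_three,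
      Matrix.one_apply] at this
    nlinarith [this]
  have h0 := hcol 0
  have h1' := hcol 1
  have h2' := hcol 2
  -- compute Psi
  have hPsi : Psi R Rd = (1 / 2) * (3 - (Q 0 0 + Q 1 1 + Q 2 2)) := by
    simp [Psi, Matrix.trace, Matrix.diag, Fin.sum_univ_three, hQdef]
  -- compute norm squared
  have hnorm : (enorm3 (eRvec R Rd)) ^ 2 =
      ((1/2) * (Q 2 1 - Q 1 2)) ^ 2 + ((1/2) * (Q 0 2 - Q 2 0)) ^ 2 +
      ((1/2) * (Q 1 0 - Q 0 1)) ^ 2 := by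
    have : (enorm3 (eRvec R Rd)) ^ 2 = ∑ i : Fin 3, (eRvec R Rd i) ^ 2 := by
      rw [enorm3, EuclideanSpace.norm_eq, Real.sq_sqrt]
      · simp [sq_abs]
      · positivity
    rw [this]
    have hT : ∀ i j : Fin 3, (Rᵀ * Rd) i j = Q j i := by
      intro i j
      simp [hQdef, Matrix.mul_apply, Matrix.transpose_apply, mul_comm]
    simp [eRvec, vee, Fin.sum_univ_three, Matrix.sub_apply, hT, hQdef]
  -- key identity: ‖e_R‖² = Ψ(2 - Ψ)
  set A := Psi R Rd with hA
  have hkey : (enorm3 (eRvec R Rd)) ^ 2 = A * (2 - A) := by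
    rw [hnorm, hPsi]
    linear_combination (h0 + h1' + h2') / 4 + (c00 + c11 + c22) / 2
  clear hadj hcof
  have hA0 : 0 ≤ A := by
    have d0 : Q 0 0 ≤ 1 := by nlinarith [h0, sq_nonneg (Q 1 0), sq_nonneg (Q 2 0), sq_nonneg (Q 0 0 - 1)]
    have d1 : Q 1 1 ≤ 1 := by nlinarith [h1', sq_nonneg (Q 0 1), sq_nonneg (Q 2 1), sq_nonneg (Q 1 1 - 1)]
    have d2 : Q 2 2 ≤ 1 := by nlinarith [h2', sq_nonneg (Q 0 2), sq_nonneg (Q 1 2), sq_nonneg (Q 2 2 - 1)]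
    rw [hPsi]; linarith
  have hψ : 0 < 2 - ψ := by linarith
  rw [hkey, le_div_iff₀ hψ]
  nlinarith [mul_nonneg hA0 (sub_nonneg.mpr h1.le)]
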